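/- Let n ≥ 2, let κ : [-1,1] → [0,∞) be measurable with ∫_{S^{n-1}} κ(v·v') dv = 1 for each v' ∈ S^{n-1}, and fix unit vectors v', e ∈ S^{n-1}. Define h(τ) = ∫_{S^{n-1}} κ(v·v') sin²(τ (v·e)/2) dv for τ > 0. Then lim_{δ→0⁺} (2/ln(1/δ)) ∫_δ^1 h(τ) τ^{−3} dτ = (1/2) ∫_{S^{n-1}} κ(v·v') (v·e)² dv. -/

import Mathlib

open MeasureTheory Metric Filter Set
open scoped ENNReal

noncomputable section

/-- Euclidean space `ℝⁿ`. -/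
abbrev Euc (n : ℕ) := EuclideanSpace ℝ (Fin n)

/-- The unit sphere `S^{n-1}` in `ℝⁿ`. -/
abbrev Sph (n : ℕ) := Metric.sphere (0 : Euc n) 1

/-- The normalized surface measure on the unit sphere (total mass `1`): the surface
measure divided by its total mass. -/
noncomputable def sphμ (n : ℕ) : Measure (Sph n) :=
  ((volume : Measure (Euc n)).toSphere Set.univ)⁻¹ • (volume : Measure (Euc n)).toSphere

/-- A path-length density: measurable, nonnegative, integrating to one on `(0,∞)`, with
finite first moment. -/
def IsPathDensity (p : ℝ → ℝ) : Prop :=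
  Measurable p ∧ (∀ s, 0 ≤ p s) ∧ (∫ s in Set.Ioi (0 : ℝ), p s = 1) ∧
    IntegrableOn (fun s => s * p s) (Set.Ioi (0 : ℝ))

/-- A normalized nonnegative angular kernel `κ` on `[-1,1]`:
`∫_{S^{n-1}} κ(v·v') dv = 1` for every `v'`. -/
def IsAngularKernel (n : ℕ) (κ : ℝ → ℝ) : Prop :=
  Measurable κ ∧ (∀ μ ∈ Set.Icc (-1 : ℝ) 1, 0 ≤ κ μ) ∧
    ∀ v' : Sph n, ∫ v, κ (inner ℝ (v : Euc n) (v' : Euc n)) ∂(sphμ n) = 1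

lemma sin_sq_bound_nonneg' {x : ℝ} (h0 : 0 ≤ x) (h1 : x ≤ 1) :
    |Real.sin x ^ 2 - x ^ 2| ≤ x ^ 4 / 2 := by
  rcases eq_or_lt_of_le h0 with rfl | hx
  · simp
  · have hs1 : x - x ^ 3 / 4 < Real.sin x := by
      have := Real.sin_gt_sub_cube hx; nlinarith [pow_pos hx 3]
    have hs2 : Real.sin x < x := Real.sin_lt hx
    have hx3 : x ^ 3 ≤ x := by nlinarith [sq_nonneg x, mul_pos hx hx]
    have hs0 : 0 ≤ Real.sin x := by nlinarith
    rw [abs_le]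
    constructor <;> nlinarith [sq_nonneg (x ^ 3), sq_nonneg x]

lemma sin_sq_bound' {x : ℝ} (h1 : |x| ≤ 1) :
    |Real.sin x ^ 2 - x ^ 2| ≤ x ^ 4 / 2 := by
  rcases le_total 0 x with hx | hx
  · exact sin_sq_bound_nonneg' hx (by rwa [abs_of_nonneg hx] at h1)
  · have := sin_sq_bound_nonneg' (x := -x) (by linarith) (by rwa [abs_of_nonpos hx] at h1)
    rw [show (-x) ^ 4 = x ^ 4 by ring] at this
    simpa using this

open intervalIntegral in
theorem aux_log_average_limit {α : Type*} [MeasurableSpace α] (μ : Measure α) (f m : α → ℝ)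
    (hf_meas : Measurable f) (hf0 : ∀ v, 0 ≤ f v) (hf1 : ∫ v, f v ∂μ = 1)
    (hm_meas : Measurable m) (hm_le : ∀ v, |m v| ≤ 1) :
    Tendsto (fun δ : ℝ => 2 / Real.log (1 / δ) *
        ∫ τ in Set.Ioc δ (1 : ℝ), (∫ v, f v * Real.sin (τ * m v / 2) ^ 2 ∂μ) / τ ^ 3 ∂volume)
      (nhdsWithin 0 (Set.Ioi (0 : ℝ)))
      (nhds (1 / 2 * ∫ v, f v * m v ^ 2 ∂μ)) := by
  have hf_int : Integrable f μ := integrable_of_integral_eq_one hf1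
  -- bounded multiples of f are integrable
  have hbd_int : ∀ g : α → ℝ, Measurable g → (∀ v, |g v| ≤ 1) →
      Integrable (fun v => f v * g v) μ := by
    intro g hg hg1
    refine hf_int.mono ((hf_meas.mul hg).aestronglyMeasurable) (ae_of_all _ fun v => ?_)
    calc ‖f v * g v‖ = ‖f v‖ * ‖g v‖ := norm_mul _ _
      _ ≤ ‖f v‖ * 1 := by
          refine mul_le_mul_of_nonneg_left ?_ (norm_nonneg _)
          rw [Real.norm_eq_abs]; exact hg1 v
      _ = ‖f v‖ := mul_one _
  have hint_sin : ∀ τ : ℝ, Integrable (fun v => f v * Real.sin (τ * m v / 2) ^ 2) μ := by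
    intro τ
    refine hbd_int _ ?_ fun v => ?_
    · exact (measurable_const.mul hm_meas).div_const 2 |>.sin.pow_const 2
    · rw [abs_of_nonneg (sq_nonneg _)]; exact Real.sin_sq_le_one _
  have hint_m2 : Integrable (fun v => f v * m v ^ 2) μ := by
    refine hbd_int _ (hm_meas.pow_const 2) fun v => ?_
    rw [abs_pow]
    exact pow_le_one₀ (abs_nonneg _) (hm_le v)
  set h : ℝ → ℝ := fun τ => ∫ v, f v * Real.sin (τ * m v / 2) ^ 2 ∂μ with hh_def
  set I : ℝ := ∫ v, f v * m v ^ 2 ∂μ with hI_def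
  -- key quantitative bound
  have hB : ∀ τ : ℝ, 0 ≤ τ → τ ≤ 1 → |h τ - τ ^ 2 / 4 * I| ≤ τ ^ 4 / 32 := by
    intro τ hτ0 hτ1
    have hint_q : Integrable (fun v => f v * (τ * m v / 2) ^ 2) μ :=
      ((hint_m2.const_mul (τ ^ 2 / 4)).congr (ae_of_all _ fun v => by ring))
    have hq_eq : τ ^ 2 / 4 * I = ∫ v, f v * (τ * m v / 2) ^ 2 ∂μ := by
      rw [hI_def, ← MeasureTheory.integral_const_mul]
      exact integral_congr_ae (ae_of_all _ fun v => by ring)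
    have hdiff : h τ - τ ^ 2 / 4 * I
        = ∫ v, (f v * Real.sin (τ * m v / 2) ^ 2 - f v * (τ * m v / 2) ^ 2) ∂μ := by
      rw [hq_eq, ← integral_sub (hint_sin τ) hint_q]
    have hpt : ∀ v, ‖f v * Real.sin (τ * m v / 2) ^ 2 - f v * (τ * m v / 2) ^ 2‖
        ≤ τ ^ 4 / 32 * f v := by
      intro v
      have hxle : |τ * m v / 2| ≤ 1 := by
        rw [abs_div, abs_mul, abs_of_nonneg hτ0, abs_two]
        have h1 := hm_le v
        have h2 := abs_nonneg (m v)
        rw [div_le_one (by norm_num)]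
        nlinarith
      have hb := sin_sq_bound' hxle
      have hm4 : m v ^ 4 ≤ 1 := by
        have h1 := hm_le v
        have h2 : m v ^ 2 ≤ 1 := by nlinarith [sq_abs (m v), abs_nonneg (m v)]
        nlinarith [sq_nonneg (m v)]
      calc ‖f v * Real.sin (τ * m v / 2) ^ 2 - f v * (τ * m v / 2) ^ 2‖
          = f v * |Real.sin (τ * m v / 2) ^ 2 - (τ * m v / 2) ^ 2| := by
            rw [← mul_sub, Real.norm_eq_abs, abs_mul, abs_of_nonneg (hf0 v)]
        _ ≤ f v * ((τ * m v / 2) ^ 4 / 2) := mul_le_mul_of_nonneg_left hb (hf0 v)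
        _ = f v * (τ ^ 4 * m v ^ 4 / 32) := by ring
        _ ≤ f v * (τ ^ 4 * 1 / 32) := by
            refine mul_le_mul_of_nonneg_left ?_ (hf0 v)
            have : (0:ℝ) ≤ τ ^ 4 := by positivity
            nlinarith
        _ = τ ^ 4 / 32 * f v := by ring
    calc |h τ - τ ^ 2 / 4 * I|
        = ‖∫ v, (f v * Real.sin (τ * m v / 2) ^ 2 - f v * (τ * m v / 2) ^ 2) ∂μ‖ := by
          rw [hdiff, Real.norm_eq_abs]
      _ ≤ ∫ v, ‖f v * Real.sin (τ * m v / 2) ^ 2 - f v * (τ * m v / 2) ^ 2‖ ∂μ :=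
          norm_integral_le_integral_norm _
      _ ≤ ∫ v, τ ^ 4 / 32 * f v ∂μ := by
          refine integral_mono ((hint_sin τ).sub hint_q).norm (hf_int.const_mul _) hpt
      _ = τ ^ 4 / 32 := by rw [MeasureTheory.integral_const_mul, hf1, mul_one]
  -- continuity of h
  have hh_cont : Continuous h := by
    rw [hh_def]
    refine continuous_of_dominated (bound := fun v => ‖f v‖) ?_ ?_ hf_int.norm ?_
    · intro τ
      exact ((hf_meas.mul ((measurable_const.mul hm_meas).div_const 2 |>.sin.pow_const
        2))).aestronglyMeasurable
    · intro τ
      refine ae_of_all _ fun v => ?_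
      calc ‖f v * Real.sin (τ * m v / 2) ^ 2‖ = ‖f v‖ * ‖Real.sin (τ * m v / 2) ^ 2‖ :=
            norm_mul _ _
        _ ≤ ‖f v‖ * 1 := by
            refine mul_le_mul_of_nonneg_left ?_ (norm_nonneg _)
            rw [Real.norm_eq_abs, abs_of_nonneg (sq_nonneg _)]
            exact Real.sin_sq_le_one _
        _ = ‖f v‖ := mul_one _
    · refine ae_of_all _ fun v => ?_
      have : Continuous fun τ : ℝ => Real.sin (τ * m v / 2) ^ 2 :=
        (Real.continuous_sin.comp ((continuous_id.mul continuous_const).div_const 2)).pow 2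
      exact continuous_const.mul this
  -- rewrite the goal through h
  have hrw : ∀ τ : ℝ, (∫ v, f v * Real.sin (τ * m v / 2) ^ 2 ∂μ) = h τ := fun τ => by
    rw [hh_def]
  simp only [hrw]
  -- the vanishing bound
  have hbound0 : Tendsto (fun δ : ℝ => 1 / 16 * (Real.log (1 / δ))⁻¹)
      (nhdsWithin 0 (Set.Ioi (0 : ℝ))) (nhds 0) := by
    have h1 : Tendsto (fun δ : ℝ => Real.log (1 / δ)) (nhdsWithin 0 (Set.Ioi (0 : ℝ))) atTop := by
      simp only [one_div, Real.log_inv]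
      exact tendsto_neg_atBot_atTop.comp Real.tendsto_log_nhdsGT_zero
    have h2 := (tendsto_inv_atTop_zero.comp h1).const_mul (1 / 16 : ℝ)
    simpa using h2
  have hmem : Ioo (0 : ℝ) (1 / 2) ∈ nhdsWithin 0 (Set.Ioi (0 : ℝ)) :=
    Ioo_mem_nhdsGT_of_mem ⟨le_refl 0, by norm_num⟩
  have hev : ∀ᶠ δ in nhdsWithin 0 (Set.Ioi (0 : ℝ)),
      ‖(2 / Real.log (1 / δ) * ∫ τ in Set.Ioc δ (1 : ℝ), h τ / τ ^ 3 ∂volume) - 1 / 2 * I‖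
        ≤ 1 / 16 * (Real.log (1 / δ))⁻¹ := by
    filter_upwards [hmem] with δ hδ
    obtain ⟨hδ0, hδhalf⟩ := hδ
    have hδ1 : δ ≤ 1 := by linarith
    have hL : 0 < Real.log (1 / δ) := Real.log_pos (by rw [lt_div_iff₀ hδ0, one_mul]; linarith)
    have hLne : Real.log (1 / δ) ≠ 0 := ne_of_gt hL
    -- integrabilities in τ
    have hco1 : ContinuousOn (fun τ : ℝ => h τ / τ ^ 3) (Icc δ 1) := by
      refine hh_cont.continuousOn.div (continuous_pow 3).continuousOn fun τ hτ => ?_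
      exact pow_ne_zero 3 (ne_of_gt (lt_of_lt_of_le hδ0 hτ.1))
    have hi1 : IntegrableOn (fun τ : ℝ => h τ / τ ^ 3) (Ioc δ 1) volume :=
      (hco1.integrableOn_Icc).mono_set Ioc_subset_Icc_self
    have hco2 : ContinuousOn (fun τ : ℝ => I / 4 * τ⁻¹) (Icc δ 1) := by
      refine continuousOn_const.mul (ContinuousOn.inv₀ continuousOn_id fun τ hτ => ?_)
      exact ne_of_gt (lt_of_lt_of_le hδ0 hτ.1)
    have hi2 : IntegrableOn (fun τ : ℝ => I / 4 * τ⁻¹) (Ioc δ 1) volume :=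
      (hco2.integrableOn_Icc).mono_set Ioc_subset_Icc_self
    have hlog : ∫ τ in Ioc δ 1, τ⁻¹ ∂volume = Real.log (1 / δ) := by
      rw [← intervalIntegral.integral_of_le hδ1]
      exact integral_inv_of_pos hδ0 one_pos
    have hIlog : ∫ τ in Ioc δ 1, I / 4 * τ⁻¹ ∂volume = I / 4 * Real.log (1 / δ) := by
      rw [MeasureTheory.integral_const_mul, hlog]
    set R : ℝ := ∫ τ in Ioc δ 1, (h τ / τ ^ 3 - I / 4 * τ⁻¹) ∂volume with hR_def
    have hsplit : ∫ τ in Ioc δ 1, h τ / τ ^ 3 ∂volume = I / 4 * Real.log (1 / δ) + R := by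
      rw [hR_def, integral_sub hi1 hi2, hIlog]; ring
    have hRbound : |R| ≤ 1 / 32 := by
      have hb : ‖R‖ ≤ 1 / 32 * (volume (Ioc δ 1)).toReal := by
        refine norm_setIntegral_le_of_norm_le_const measure_Ioc_lt_top
          fun τ hτ => ?_
        have hτ0 : 0 < τ := hδ0.trans hτ.1
        have hτ1 : τ ≤ 1 := hτ.2
        have heq : h τ / τ ^ 3 - I / 4 * τ⁻¹ = (h τ - τ ^ 2 / 4 * I) / τ ^ 3 := by
          field_simp
        rw [Real.norm_eq_abs, heq, abs_div, abs_of_pos (pow_pos hτ0 3)]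
        have hb2 := hB τ hτ0.le hτ1
        calc |h τ - τ ^ 2 / 4 * I| / τ ^ 3 ≤ (τ ^ 4 / 32) / τ ^ 3 := by gcongr
          _ = τ / 32 := by field_simp
          _ ≤ 1 / 32 := by linarith
      have hvol : (volume (Ioc δ 1)).toReal ≤ 1 := by
        rw [Real.volume_Ioc, ENNReal.toReal_ofReal (by linarith)]; linarith
      calc |R| = ‖R‖ := (Real.norm_eq_abs R).symm
        _ ≤ 1 / 32 * (volume (Ioc δ 1)).toReal := hb
        _ ≤ 1 / 32 * 1 := mul_le_mul_of_nonneg_left hvol (by norm_num)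
        _ = 1 / 32 := by norm_num
    have hkey : 2 / Real.log (1 / δ) * ∫ τ in Ioc δ 1, h τ / τ ^ 3 ∂volume - 1 / 2 * I
        = 2 / Real.log (1 / δ) * R := by
      rw [hsplit]; field_simp; ring
    rw [hkey, Real.norm_eq_abs, abs_mul, abs_div, abs_two, abs_of_pos hL]
    calc 2 / Real.log (1 / δ) * |R| ≤ 2 / Real.log (1 / δ) * (1 / 32) := by
          refine mul_le_mul_of_nonneg_left hRbound (by positivity)
      _ = 1 / 16 * (Real.log (1 / δ))⁻¹ := by rw [div_eq_mul_inv]; ring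
  have hzero := squeeze_zero_norm' hev hbound0
  have hfin := hzero.add (tendsto_const_nhds (x := 1 / 2 * I))
  simpa using hfin

/-- the L'Hôpital-type computation in case (c) of Proposition 4.5:
`(2/ln(1/δ)) ∫_δ^1 h(τ) τ⁻³ dτ → (1/2) ∫_{S^{n-1}} κ(v·v') (v·e)² dv` as `δ → 0⁺`,
where `h(τ) = ∫_{S^{n-1}} κ(v·v') sin²(τ(v·e)/2) dv`. -/
theorem log_average_limit
    (n : ℕ) (hn : 2 ≤ n)
    (κ : ℝ → ℝ) (hκ : IsAngularKernel n κ)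
    (v' e : Sph n) :
    Tendsto
      (fun δ : ℝ => 2 / Real.log (1 / δ) *
        ∫ τ in Set.Ioc δ (1 : ℝ),
          (∫ v : Sph n, κ (inner ℝ (v : Euc n) (v' : Euc n)) *
            Real.sin (τ * inner ℝ (v : Euc n) (e : Euc n) / 2) ^ 2 ∂(sphμ n)) / τ ^ 3
          ∂volume)
      (nhdsWithin 0 (Set.Ioi (0 : ℝ)))
      (nhds (1 / 2 *
        ∫ v : Sph n, κ (inner ℝ (v : Euc n) (v' : Euc n)) *
          (inner ℝ (v : Euc n) (e : Euc n) : ℝ) ^ 2 ∂(sphμ n))) := by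
  obtain ⟨hκm, hκ0, hκ1⟩ := hκ
  have hnorm : ∀ v : Sph n, ‖(v : Euc n)‖ = 1 := fun v => by
    simpa using mem_sphere_zero_iff_norm.mp v.2
  have hinner_le : ∀ (w v : Sph n), |(inner ℝ (v : Euc n) (w : Euc n) : ℝ)| ≤ 1 := by
    intro w v
    simpa [hnorm] using abs_real_inner_le_norm (v : Euc n) (w : Euc n)
  exact aux_log_average_limit (sphμ n)
    (fun v => κ (inner ℝ (v : Euc n) (v' : Euc n)))
    (fun v => (inner ℝ (v : Euc n) (e : Euc n) : ℝ))
    (hκm.comp (continuous_subtype_val.inner continuous_const).measurable)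
    (fun v => hκ0 _ (abs_le.mp (hinner_le v' v)))
    (hκ1 v')
    (continuous_subtype_val.inner continuous_const).measurable
    (fun v => hinner_le e v)
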